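/- Let f > 0, v > 0, Y ≠ 0, and X₀ > 0. Suppose a feature has camera-frame coordinates (X(t), Y) with X(t) = X₀ − v·t (the camera translates toward the feature plane at constant speed v with constant heading), and let its image coordinate under perspective projection be r(t) = f·Y/X(t). Then for every t with X(t) > 0, r is differentiable at t with r′(t) ≠ 0, and r(t)/r′(t) = X(t)/v; that is, the ratio r/ṙ of the image coordinate to its rate of change equals the remaining time until the camera crosses the plane through the feature perpendicular to the direction of motion. -/

import Mathlib

open Real

/-- For straight constant-speed motion toward the feature plane, time-to-transit is
recoverable from the image plane: `r/ṙ = X/v`, the remaining time until the camera crosses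
the plane through the feature perpendicular to the direction of motion. -/
theorem time_to_transit_from_image_motion (f v Y X₀ : ℝ) (hf : 0 < f) (hv : 0 < v)
    (hY : Y ≠ 0) (hX₀ : 0 < X₀) :
    ∀ t : ℝ, 0 < X₀ - v * t →
      DifferentiableAt ℝ (fun s : ℝ => f * Y / (X₀ - v * s)) t ∧
      deriv (fun s : ℝ => f * Y / (X₀ - v * s)) t ≠ 0 ∧
      (f * Y / (X₀ - v * t)) / deriv (fun s : ℝ => f * Y / (X₀ - v * s)) t =
        (X₀ - v * t) / v := by
  intro t ht
  have hne : X₀ - v * t ≠ 0 := ne_of_gt ht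
  have hg : HasDerivAt (fun s : ℝ => X₀ - v * s) (-v) t := by
    simpa using ((hasDerivAt_id t).const_mul v).const_sub X₀
  have hd : HasDerivAt (fun s : ℝ => f * Y / (X₀ - v * s))
      ((0 * (X₀ - v * t) - f * Y * (-v)) / (X₀ - v * t) ^ 2) t :=
    (hasDerivAt_const t (f * Y)).div hg hne
  have hderiv : deriv (fun s : ℝ => f * Y / (X₀ - v * s)) t
      = f * Y * v / (X₀ - v * t) ^ 2 := by
    rw [hd.deriv]; ring
  refine ⟨hd.differentiableAt, ?_, ?_⟩
  · rw [hderiv]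
    positivity
  · rw [hderiv]
    field_simp
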